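/- For every n ≥ 1, Sada's sequence s(n) satisfies: if {(n+1)φ} < 2 − φ then s(n) = n + 1, and otherwise s(n) = ⌊(n+1)/φ⌋. -/

import Mathlib

/-- The golden ratio `(1 + √5)/2`. -/
noncomputable def phi : ℝ := (1 + Real.sqrt 5) / 2

/-- The Hurt-Sada array `A : ℕ → ℕ → ℕ`.  Row `0` is the identity sequence;
row `n+1` is obtained from row `n` by moving the entry `n+1` (located at the unique
position `p` with `A n p = n+1`) by `n+1` places to the right, shifting the jumped-over
entries one place left. -/
noncomputable def A : ℕ → ℕ → ℕ
  | 0, k => k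
  | n + 1, j =>
    let p := sInf {i | A n i = n + 1}
    if j < p then A n j
    else if j < p + (n + 1) then A n (j + 1)
    else if j = p + (n + 1) then n + 1
    else A n j

/-- `p n` is the (unique) position of `n` in row `n-1` of the Hurt-Sada array. -/
noncomputable def p (n : ℕ) : ℕ := sInf {i | A (n - 1) i = n}

/-- Sada's sequence: `s n` is the first element that `n` jumps over. -/
noncomputable def s (n : ℕ) : ℕ := A (n - 1) (p n + 1)


lemma phi_eq : phi = Real.goldenRatio := rfl
lemma phi_pos : 0 < phi := by unfold phi; positivity
lemma sqrt5_sq : Real.sqrt 5 ^ 2 = 5 := Real.sq_sqrt (by norm_num)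
lemma phi_sq : phi ^ 2 = phi + 1 := by rw [phi_eq]; exact Real.goldenRatio_sq
lemma phi_gt : (1.61 : ℝ) < phi := by
  unfold phi; nlinarith [sqrt5_sq, Real.sqrt_nonneg 5]
lemma phi_lt : phi < 1.62 := by
  unfold phi; nlinarith [sqrt5_sq, Real.sqrt_nonneg 5]
lemma phi_irr : Irrational phi := by rw [phi_eq]; exact Real.goldenRatio_irrational
/-- kφ ≠ m for k ≥ 1 -/
lemma nat_mul_phi_ne (k : ℕ) (hk : 1 ≤ k) (m : ℝ) (hm : ∃ r : ℚ, (r:ℝ) = m) : (k:ℝ) * phi ≠ m := by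
  rintro h
  obtain ⟨r, rfl⟩ := hm
  have : Irrational ((k:ℝ) * phi) := by
    have := phi_irr.natCast_mul (Nat.one_le_iff_ne_zero.1 hk)
    simpa using this
  exact this ⟨r, h.symm⟩

noncomputable def q (v : ℕ) : ℕ := ⌊((v:ℝ)+1)/phi⌋₊

lemma le_q {m v : ℕ} : m ≤ q v ↔ (m:ℝ) * phi < (v:ℝ) + 1 := by
  unfold q
  rw [Nat.le_floor_iff (div_nonneg (by positivity) phi_pos.le), le_div_iff₀ phi_pos]
  constructor
  · intro h
    rcases h.lt_or_eq with h' | h'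
    · exact h'
    · rcases Nat.eq_zero_or_pos m with rfl | hm
      · simp at h' ⊢; positivity
      · exact absurd h' (nat_mul_phi_ne m hm _ ⟨(v:ℚ)+1, by push_cast; ring⟩)
  · exact le_of_lt

lemma q_le {m v : ℕ} : q v ≤ m ↔ (v:ℝ) + 1 < ((m:ℝ)+1) * phi := by
  rw [← Nat.lt_succ_iff, ← not_le, le_q, not_lt]
  push_cast
  constructor
  · intro h
    rcases h.lt_or_eq with h' | h'
    · exact h'
    · exfalso
      exact nat_mul_phi_ne (m+1) (by omega) ((v:ℝ)+1) ⟨(v:ℚ)+1, by push_cast; ring⟩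
        (by push_cast; linarith [h'])
  · exact le_of_lt

lemma q_lb (v : ℕ) : (q v : ℝ) * phi < (v:ℝ) + 1 := le_q.1 le_rfl
lemma q_ub (v : ℕ) : (v:ℝ) + 1 < ((q v : ℝ)+1) * phi := q_le.1 le_rfl
lemma q_le_self (v : ℕ) : q v ≤ v := q_le.2 (by nlinarith [phi_gt])

noncomputable def pos (n v : ℕ) : ℕ :=
  if v ≤ n then v + (q v + v - n) else v - (n + 1 - q v)

lemma I1 {n v : ℕ} (h : q v + v ≤ n) : v < q (n+1) := by
  have h1 := q_ub v
  have hc : ((q v : ℝ)) + v ≤ n := by exact_mod_cast h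
  have : ((v:ℝ)+1) * phi < (n:ℝ) + 2 := by nlinarith [phi_sq, phi_gt]
  have := le_q.2 (show ((v+1 : ℕ):ℝ) * phi < ((n+1:ℕ):ℝ) + 1 by push_cast; push_cast at this; linarith)
  omega

lemma I2 {n v : ℕ} (h : n + 1 ≤ q v + v) : q (n+1) + n + 1 ≤ 2*v + q v := by
  have h1 := q_lb v
  have hc : (n:ℝ) + 1 ≤ (q v : ℝ) + v := by exact_mod_cast h
  have hle : q (n+1) ≤ 2*v + q v - (n+1) := by
    apply q_le.2
    have hcast : ((2*v + q v - (n+1) : ℕ) : ℝ) = 2*(v:ℝ) + q v - (n+1) := by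
      have : n + 1 ≤ 2*v + q v := by omega
      push_cast [Nat.cast_sub this]; ring
    rw [hcast]
    push_cast
    nlinarith [phi_sq, phi_gt]
  omega

lemma I3 {n v : ℕ} (hv : v ≤ n) : 2*v + q v ≤ q (n+1) + 2*n + 1 := by
  by_cases h2 : 2*v + q v ≤ 2*n + 1
  · omega
  · have h1 := q_lb v
    have hvr : (v:ℝ) ≤ n := by exact_mod_cast hv
    have hle : 2*v + q v - (2*n+1) ≤ q (n+1) := by
      apply le_q.2
      have hcast : ((2*v + q v - (2*n+1) : ℕ) : ℝ) = 2*(v:ℝ) + q v - (2*n+1) := by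
        push_cast [Nat.cast_sub (by omega : 2*n+1 ≤ 2*v + q v)]; ring
      rw [hcast]
      push_cast
      nlinarith [phi_sq, phi_gt]
    omega

lemma I4 {n v : ℕ} (h2 : n + 2 ≤ v) : q (n+1) + n + 2 ≤ v + q v := by
  have h1 := q_ub v
  have hvr : (n:ℝ) + 2 ≤ v := by exact_mod_cast h2
  have hle : q (n+1) ≤ v + q v - (n+2) := by
    apply q_le.2
    have hcast : ((v + q v - (n+2) : ℕ) : ℝ) = (v:ℝ) + q v - (n+2) := by
      push_cast [Nat.cast_sub (by omega : n+2 ≤ v + q v)]; ring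
    rw [hcast]
    push_cast
    nlinarith [phi_sq, phi_gt, mul_lt_mul_of_pos_right h1 phi_pos]
  omega

lemma I5 {n v : ℕ} (h : q v ≤ n) : v + q v ≤ q (n+1) + 2*n + 2 := by
  by_cases h2 : v + q v ≤ 2*n + 2
  · omega
  · have h1 := q_ub v
    have hqr : (q v : ℝ) ≤ n := by exact_mod_cast h
    have hle : v + q v - (2*n+2) ≤ q (n+1) := by
      apply le_q.2
      have hcast : ((v + q v - (2*n+2) : ℕ) : ℝ) = (v:ℝ) + q v - (2*n+2) := by
        push_cast [Nat.cast_sub (by omega : 2*n+2 ≤ v + q v)]; ring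
      rw [hcast]
      push_cast
      nlinarith [phi_sq, phi_gt]
    omega

lemma I6 {n v : ℕ} (h : q v = n+1) (hv : n + 2 ≤ v) :
    q (n+1) < v ∧ v ≤ q (n+1) + n + 1 := by
  have h1 := q_lb v
  have h2 := q_ub v
  rw [h] at h1 h2
  push_cast at h1 h2
  have hvr : (n:ℝ) + 2 ≤ v := by exact_mod_cast hv
  constructor
  · have : q (n+1) ≤ v - 1 := by
      apply q_le.2
      have hcast : ((v - 1 : ℕ) : ℝ) = (v:ℝ) - 1 := by
        push_cast [Nat.cast_sub (by omega : 1 ≤ v)]; ring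
      rw [hcast]
      push_cast
      nlinarith [phi_sq, phi_gt]
    omega
  · have : v - (n+1) ≤ q (n+1) := by
      apply le_q.2
      have hcast : ((v - (n+1) : ℕ) : ℝ) = (v:ℝ) - (n+1) := by
        push_cast [Nat.cast_sub (by omega : n+1 ≤ v)]; ring
      rw [hcast]
      push_cast
      nlinarith [phi_sq, phi_gt, mul_lt_mul_of_pos_right h2 phi_pos]
    omega

lemma I7 {n v : ℕ} (h : n + 2 ≤ q v) : q (n+1) + n + 2 ≤ v := by
  have h1 : ((n:ℝ)+2) * phi < (v:ℝ) + 1 := by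
    have := le_q.1 (show n + 2 ≤ q v from h)
    push_cast at this ⊢
    convert this using 2 <;> push_cast <;> ring
  have hv2 : n + 2 ≤ v := by
    have : ((n:ℝ)+2) ≤ v := by nlinarith [phi_gt]
    exact_mod_cast this
  have hle : q (n+1) ≤ v - (n+2) := by
    apply q_le.2
    have hcast : ((v - (n+2) : ℕ) : ℝ) = (v:ℝ) - (n+2) := by
      push_cast [Nat.cast_sub hv2]; ring
    rw [hcast]
    push_cast
    nlinarith [phi_sq, phi_gt]
  omega

def Fm (P n j : ℕ) : ℕ :=
  if j = P then P + n + 1 else if P < j ∧ j ≤ P + n + 1 then j - 1 else j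

def Gm (P n j : ℕ) : ℕ :=
  if j < P then j else if j < P + n + 1 then j + 1 else if j = P + n + 1 then P else j

lemma FG (P n j : ℕ) : Fm P n (Gm P n j) = j := by
  unfold Fm Gm; split_ifs <;> omega

lemma pos_zero (v : ℕ) : pos 0 v = v := by
  rcases Nat.eq_zero_or_pos v with rfl | hv
  · have : q 0 = 0 := by
      have := q_le (m := 0) (v := 0)
      push_cast at this
      exact Nat.le_zero.1 (this.2 (by nlinarith [phi_gt]))
    simp [pos, this]
  · have h1 : 1 ≤ q v := le_q.2 (by
      have h2 : (1:ℝ) ≤ v := by exact_mod_cast hv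
      rw [Nat.cast_one, one_mul]
      nlinarith [phi_lt, phi_gt])
    have := q_le_self v
    simp only [pos]
    split_ifs <;> omega

lemma hstep (n v : ℕ) : pos (n+1) v = Fm (q (n+1)) n (pos n v) := by
  have hq := q_le_self v
  have hP := q_le_self (n+1)
  rcases lt_trichotomy v (n+1) with h | h | h
  · by_cases hc : q v + v ≤ n
    · have h1 := I1 hc
      simp only [pos, Fm]; split_ifs <;> omega
    · have h2 := I2 (n := n) (v := v) (by omega)
      have h3 := I3 (n := n) (v := v) (by omega)
      simp only [pos, Fm]; split_ifs <;> omega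
  · subst h
    simp only [pos, Fm]; split_ifs <;> omega
  · rcases lt_trichotomy (q v) (n+1) with h' | h' | h'
    · have h4 := I4 (n := n) (v := v) (by omega)
      have h5 := I5 (n := n) (v := v) (by omega)
      simp only [pos, Fm]; split_ifs <;> omega
    · have h6 := I6 h' (by omega)
      simp only [pos, Fm]; split_ifs <;> omega
    · have h7 := I7 (n := n) (v := v) (by omega)
      simp only [pos, Fm]; split_ifs <;> omega

lemma main (n : ℕ) : (∀ v, A n (pos n v) = v) ∧ Function.Surjective (pos n) := by
  induction n with
  | zero =>
    constructor
    · intro v; rw [pos_zero]; rfl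
    · intro j; exact ⟨j, pos_zero j⟩
  | succ n ih =>
    have hpos : pos n (n+1) = q (n+1) := by
      have := q_le_self (n+1)
      simp only [pos]; split_ifs <;> omega
    have hAP : A n (q (n+1)) = n + 1 := by rw [← hpos]; exact ih.1 (n+1)
    have hset : {i | A n i = n + 1} = {q (n+1)} := by
      ext i
      simp only [Set.mem_setOf_eq, Set.mem_singleton_iff]
      constructor
      · intro hi
        obtain ⟨v, hv⟩ := ih.2 i
        have : v = n + 1 := by rw [← hi, ← hv]; exact (ih.1 v).symm
        subst this
        rw [← hv, hpos]
      · rintro rfl; exact hAP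
    have hsInf : sInf {i | A n i = n + 1} = q (n+1) := by
      rw [hset, csInf_singleton]
    have hA : ∀ j, A (n+1) j =
        if j < q (n+1) then A n j
        else if j < q (n+1) + (n + 1) then A n (j + 1)
        else if j = q (n+1) + (n + 1) then n + 1
        else A n j := by
      intro j
      rw [A]
      simp only [hsInf]
    have hAF : ∀ j, A (n+1) (Fm (q (n+1)) n j) = A n j := by
      intro j
      rcases eq_or_ne j (q (n+1)) with rfl | hne
      · have hF : Fm (q (n+1)) n (q (n+1)) = q (n+1) + (n + 1) := by
          unfold Fm; rw [if_pos rfl]; omega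
        rw [hF, hA, if_neg (by omega), if_neg (by omega), if_pos rfl, hAP]
      · by_cases hwin : q (n+1) < j ∧ j ≤ q (n+1) + n + 1
        · have hF : Fm (q (n+1)) n j = j - 1 := by
            simp only [Fm, if_neg hne, if_pos hwin]
          rw [hF, hA, if_neg (by omega), if_pos (by omega)]
          congr 1; omega
        · have hF : Fm (q (n+1)) n j = j := by
            simp only [Fm, if_neg hne, if_neg hwin]
          rw [hF, hA]
          rcases Nat.lt_or_ge j (q (n+1)) with h | h
          · rw [if_pos h]
          · rw [if_neg (by omega), if_neg (by omega), if_neg (by omega)]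
    constructor
    · intro v
      rw [hstep, hAF]
      exact ih.1 v
    · intro j
      obtain ⟨v, hv⟩ := ih.2 (Gm (q (n+1)) n j)
      exact ⟨v, by rw [hstep, hv, FG]⟩

lemma sInf_row (m : ℕ) : sInf {i | A m i = m + 1} = q (m+1) := by
  have hpos : pos m (m+1) = q (m+1) := by
    have := q_le_self (m+1)
    simp only [pos]; split_ifs <;> omega
  have hAP : A m (q (m+1)) = m + 1 := by rw [← hpos]; exact (main m).1 (m+1)
  have hset : {i | A m i = m + 1} = {q (m+1)} := by
    ext i
    simp only [Set.mem_setOf_eq, Set.mem_singleton_iff]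
    constructor
    · intro hi
      obtain ⟨v, hv⟩ := (main m).2 i
      have : v = m + 1 := by rw [← hi, ← hv]; exact ((main m).1 v).symm
      subst this
      rw [← hv, hpos]
    · rintro rfl; exact hAP
  rw [hset, csInf_singleton]


theorem sada_sequence_formula (n : ℕ) (hn : 1 ≤ n) :
    (Int.fract (((n : ℝ) + 1) * phi) < 2 - phi → s n = n + 1) ∧
      (¬ Int.fract (((n : ℝ) + 1) * phi) < 2 - phi → s n = ⌊((n : ℝ) + 1) / phi⌋₊) := by
  obtain ⟨m, rfl⟩ : ∃ m, n = m + 1 := ⟨n - 1, by omega⟩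
  have hp : p (m+1) = q (m+1) := by
    unfold p
    rw [Nat.add_sub_cancel]
    exact sInf_row m
  have hs : s (m+1) = A m (q (m+1) + 1) := by
    unfold s
    rw [Nat.add_sub_cancel, hp]
  set g := q (m+1) with hg
  have hg1 : (g:ℝ) * phi < (m:ℝ) + 2 := by have := q_lb (m+1); push_cast at this; linarith
  have hg2 : (m:ℝ) + 2 < ((g:ℝ) + 1) * phi := by have := q_ub (m+1); push_cast at this; linarith
  have hgm : g ≤ m + 1 := q_le_self (m+1)
  have hgmr : (g:ℝ) ≤ m + 1 := by exact_mod_cast hgm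
  have harg : ((m+1:ℕ):ℝ) + 1 = (m:ℝ) + 2 := by push_cast; ring
  have hfloor : ⌊((m:ℝ)+2) * phi⌋ = (m + 2 + g : ℕ) := by
    rw [Int.floor_eq_iff]
    push_cast
    constructor
    · nlinarith [phi_sq, phi_gt]
    · nlinarith [phi_sq, phi_gt]
  have hfr : Int.fract ((((m+1:ℕ):ℝ) + 1) * phi) = ((m:ℝ)+2)*phi - ((m:ℝ) + 2 + g) := by
    rw [harg, Int.fract, hfloor]
    push_cast
    ring
  constructor
  · intro hC
    rw [hfr] at hC
    have hyp : ((m:ℝ)+3) * phi < (m:ℝ) + 4 + g := by nlinarith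
    have hq2 : q (m+2) = g := by
      apply le_antisymm
      · apply q_le.2
        push_cast
        nlinarith [phi_sq, phi_gt, mul_lt_mul_of_pos_right hyp phi_pos]
      · apply le_q.2
        push_cast
        linarith
    have hpos2 : pos m (m+2) = g + 1 := by
      simp only [pos]
      rw [if_neg (by omega)]
      omega
    rw [hs, show g + 1 = pos m (m+2) by omega]
    have := (main m).1 (m+2)
    omega
  · intro hNC
    rw [hfr, not_lt] at hNC
    have hne : ((m:ℝ)+3) * phi ≠ (m:ℝ) + 4 + g := by
      intro h
      exact nat_mul_phi_ne (m+3) (by omega) ((m:ℝ)+4+g) ⟨(m:ℚ)+4+(g:ℚ), by push_cast; ring⟩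
        (by push_cast; linarith [h])
    have hyp : (m:ℝ) + 4 + g < ((m:ℝ)+3) * phi := by
      rcases lt_or_eq_of_le (show ((m:ℝ)+4+g) ≤ ((m:ℝ)+3)*phi by nlinarith) with h | h
      · exact h
      · exact absurd h.symm hne
    have hgm2 : g ≤ m := by
      have h1 : (g:ℝ) < (m:ℝ) + 1 := by nlinarith [phi_lt]
      have h2 : g < m + 1 := by exact_mod_cast h1
      omega
    have hqg : q g = m + 1 - g := by
      have hcast : ((m + 1 - g : ℕ) : ℝ) = (m:ℝ) + 1 - g := by
        push_cast [Nat.cast_sub hgm]; ring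
      apply le_antisymm
      · apply q_le.2
        rw [hcast]
        nlinarith [phi_sq, phi_gt, mul_lt_mul_of_pos_right hyp phi_pos]
      · apply le_q.2
        rw [hcast]
        nlinarith [phi_sq, phi_gt, mul_lt_mul_of_pos_right hyp phi_pos]
    have hpos3 : pos m g = g + 1 := by
      simp only [pos]
      rw [if_pos hgm2]
      omega
    have hfl : ⌊(((m+1:ℕ):ℝ) + 1) / phi⌋₊ = g := rfl
    rw [hfl, hs, show g + 1 = pos m g by omega]
    exact (main m).1 g
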